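/- Let t = -2 + x₁² + x₂² - x₁x₂x₃ + x₃² and b ∈ ℂ. For a = (a₁,a₂,a₃) ∈ ℤ≥0³ with a₂ > 0 and a₃ > 0, and s = a - (0,1,1), the 3-form d((t - b)·x^s dx₂∧dx₃) equals -((a₁+1)x^a + v)·dx₁∧dx₂∧dx₃ for some polynomial v of total degree strictly less than |a| = a₁+a₂+a₃. -/

import Mathlib

open MvPolynomial

/-- The boundary trace polynomial of the one-holed torus. -/
noncomputable def t : MvPolynomial (Fin 3) ℂ :=
  -2 + X 0 ^ 2 + X 1 ^ 2 - X 0 * X 1 * X 2 + X 2 ^ 2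

private lemma Xmul (i : Fin 3) (s : Fin 3 →₀ ℕ) (c : ℂ) :
    (X i : MvPolynomial (Fin 3) ℂ) * monomial s c = monomial (Finsupp.single i 1 + s) c := by
  rw [X, monomial_mul, one_mul]

private lemma key1 (a : Fin 3 → ℕ) (h2 : 0 < a 1) (h3 : 0 < a 2) :
    Finsupp.single 1 1 + (Finsupp.single 2 1 +
      Finsupp.equivFunOnFinite.symm ![a 0, a 1 - 1, a 2 - 1]) =
    Finsupp.equivFunOnFinite.symm a := by
  refine Finsupp.ext fun j => ?_
  fin_cases j <;> simp only [Finsupp.coe_add, Pi.add_apply, Finsupp.single_apply] <;> simp <;> omega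

private lemma key2 (a : Fin 3 → ℕ) (h1 : 0 < a 0) (h2 : 0 < a 1) (h3 : 0 < a 2) :
    Finsupp.single 0 1 + (Finsupp.single 1 1 + (Finsupp.single 2 1 +
      (Finsupp.equivFunOnFinite.symm ![a 0, a 1 - 1, a 2 - 1] - Finsupp.single 0 1))) =
    Finsupp.equivFunOnFinite.symm a := by
  refine Finsupp.ext fun j => ?_
  fin_cases j <;> simp only [Finsupp.coe_add, Pi.add_apply, Finsupp.tsub_apply, Finsupp.single_apply] <;> simp <;> omega

private lemma sum3 (f : Fin 3 →₀ ℕ) : f.sum (fun _ e => e) = f 0 + f 1 + f 2 := by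
  rw [Finsupp.sum_fintype _ _ (fun _ => rfl)]
  simp [Fin.sum_univ_three]

/-- For `a ∈ ℤ³₊` with `a₂, a₃ > 0` and `s = a - (0,1,1)`, the 3-form
`d((t-b)·x^s dx₂∧dx₃) = -((a₁+1)x^a + v) dx₁∧dx₂∧dx₃` with `deg v < |a|`.
Since `d(f dx₂∧dx₃) = (∂₁ f) dx₁∧dx₂∧dx₃`, this is a statement about `∂₁`. -/
theorem stmt_6 (b : ℂ) (a : Fin 3 → ℕ) (h2 : 0 < a 1) (h3 : 0 < a 2) :
    ∃ v : MvPolynomial (Fin 3) ℂ,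
      pderiv 0 ((t - C b) *
          monomial (Finsupp.equivFunOnFinite.symm ![a 0, a 1 - 1, a 2 - 1]) 1) =
        -(C ((a 0 : ℂ) + 1) * monomial (Finsupp.equivFunOnFinite.symm a) 1 + v) ∧
      v.totalDegree < a 0 + a 1 + a 2 := by
  have h2c : ((2 : MvPolynomial (Fin 3) ℂ)) = C 2 := (map_ofNat C 2).symm
  have hdt : pderiv (0 : Fin 3) (t - C b) = 2 * X 0 - X 1 * X 2 := by
    simp [t, h2c, pderiv_X, pderiv_C]
    ring
  have hss0 : Finsupp.equivFunOnFinite.symm ![a 0, a 1 - 1, a 2 - 1] 0 = a 0 := rfl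
  have hprod : pderiv 0 ((t - C b) *
        monomial (Finsupp.equivFunOnFinite.symm ![a 0, a 1 - 1, a 2 - 1]) 1)
      = (2 * X 0 - X 1 * X 2) *
          monomial (Finsupp.equivFunOnFinite.symm ![a 0, a 1 - 1, a 2 - 1]) 1
        + (t - C b) * monomial
            (Finsupp.equivFunOnFinite.symm ![a 0, a 1 - 1, a 2 - 1] - Finsupp.single 0 1)
            ((a 0 : ℂ)) := by
    rw [pderiv_mul, hdt, pderiv_monomial, hss0, one_mul]
  have hXm : (X 1 : MvPolynomial (Fin 3) ℂ) *
      (X 2 * monomial (Finsupp.equivFunOnFinite.symm ![a 0, a 1 - 1, a 2 - 1]) 1)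
      = monomial (Finsupp.equivFunOnFinite.symm a) 1 := by
    rw [Xmul, Xmul, key1 a h2 h3]
  have hdegss : (Finsupp.equivFunOnFinite.symm ![a 0, a 1 - 1, a 2 - 1]).sum (fun _ e => e)
      = a 0 + (a 1 - 1) + (a 2 - 1) := by
    rw [sum3]; rfl
  have hdeg2X : (2 * X 0 : MvPolynomial (Fin 3) ℂ).totalDegree ≤ 1 := by
    rw [h2c]
    calc (C 2 * X 0 : MvPolynomial (Fin 3) ℂ).totalDegree
        ≤ (C 2 : MvPolynomial (Fin 3) ℂ).totalDegree +
          (X 0 : MvPolynomial (Fin 3) ℂ).totalDegree := totalDegree_mul _ _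
      _ ≤ 1 := by rw [totalDegree_C, totalDegree_X]
  have e1 : (2 * X 0 *
        monomial (Finsupp.equivFunOnFinite.symm ![a 0, a 1 - 1, a 2 - 1]) 1 :
          MvPolynomial (Fin 3) ℂ).totalDegree
      ≤ 1 + (a 0 + (a 1 - 1) + (a 2 - 1)) :=
    (totalDegree_mul _ _).trans
      (add_le_add hdeg2X ((totalDegree_monomial_le _ _).trans hdegss.le))
  have ht : t = -2 + X 0 ^ 2 + X 1 ^ 2 - X 0 * X 1 * X 2 + X 2 ^ 2 := rfl
  rcases Nat.eq_zero_or_pos (a 0) with ha0 | ha0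
  · refine ⟨-(2 * X 0 * monomial (Finsupp.equivFunOnFinite.symm ![a 0, a 1 - 1, a 2 - 1]) 1),
      ?_, ?_⟩
    · have hc0 : ((a 0 : ℂ)) = 0 := by rw [ha0]; norm_num
      rw [hprod, hc0, map_zero, mul_zero, add_zero]
      have hC1 : (C ((0 : ℂ) + 1) : MvPolynomial (Fin 3) ℂ) = 1 := by norm_num
      rw [hC1]
      linear_combination -hXm
    · rw [totalDegree_neg]
      exact e1.trans_lt (by omega)
  · refine ⟨-(2 * X 0 * monomial (Finsupp.equivFunOnFinite.symm ![a 0, a 1 - 1, a 2 - 1]) 1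
        + monomial (Finsupp.equivFunOnFinite.symm ![a 0, a 1 - 1, a 2 - 1] - Finsupp.single 0 1)
            ((a 0 : ℂ))
          * (-2 + X 0 ^ 2 + X 1 ^ 2 + X 2 ^ 2 - C b)), ?_, ?_⟩
    · rw [hprod]
      have hXm2 : (X 0 : MvPolynomial (Fin 3) ℂ) * (X 1 * (X 2 *
          monomial (Finsupp.equivFunOnFinite.symm ![a 0, a 1 - 1, a 2 - 1] - Finsupp.single 0 1)
            ((a 0 : ℂ))))
          = monomial (Finsupp.equivFunOnFinite.symm a) ((a 0 : ℂ)) := by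
        rw [Xmul, Xmul, Xmul, key2 a ha0 h2 h3]
      have hm : monomial (Finsupp.equivFunOnFinite.symm a) ((a 0 : ℂ))
          = C ((a 0 : ℂ)) * monomial (Finsupp.equivFunOnFinite.symm a) 1 := by
        rw [C_mul_monomial, mul_one]
      have hC : (C ((a 0 : ℂ) + 1) : MvPolynomial (Fin 3) ℂ) = C ((a 0 : ℂ)) + 1 := by
        rw [map_add, map_one]
      linear_combination (monomial
          (Finsupp.equivFunOnFinite.symm ![a 0, a 1 - 1, a 2 - 1] - Finsupp.single 0 1)
          ((a 0 : ℂ))) * ht - hXm - hXm2 - hm +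
        (monomial (Finsupp.equivFunOnFinite.symm a) 1) * hC
    · rw [totalDegree_neg]
      have hdegss' : ((Finsupp.equivFunOnFinite.symm ![a 0, a 1 - 1, a 2 - 1]) -
            Finsupp.single 0 1).sum (fun _ e => e)
          = (a 0 - 1) + (a 1 - 1) + (a 2 - 1) := by
        rw [sum3]
        simp [Finsupp.tsub_apply, Finsupp.single_apply]
      have hq : (-2 + X 0 ^ 2 + X 1 ^ 2 + X 2 ^ 2 - C b : MvPolynomial (Fin 3) ℂ).totalDegree
          ≤ 2 := by
        have hmax : ∀ p q : MvPolynomial (Fin 3) ℂ, p.totalDegree ≤ 2 → q.totalDegree ≤ 2 →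
            (p + q).totalDegree ≤ 2 := fun p q hp hq =>
          (totalDegree_add p q).trans (max_le hp hq)
        have hX : ∀ i : Fin 3, ((X i : MvPolynomial (Fin 3) ℂ) ^ 2).totalDegree ≤ 2 := by
          intro i; rw [totalDegree_X_pow]
        rw [sub_eq_add_neg]
        refine hmax _ _ (hmax _ _ (hmax _ _ (hmax _ _ ?_ (hX 0)) (hX 1)) (hX 2)) ?_
        · rw [show (-2 : MvPolynomial (Fin 3) ℂ) = -(C 2) by rw [← h2c],
            totalDegree_neg, totalDegree_C]; omega
        · rw [totalDegree_neg, totalDegree_C]; omega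
      have e2 : (monomial
            (Finsupp.equivFunOnFinite.symm ![a 0, a 1 - 1, a 2 - 1] - Finsupp.single 0 1)
            ((a 0 : ℂ))
            * (-2 + X 0 ^ 2 + X 1 ^ 2 + X 2 ^ 2 - C b) : MvPolynomial (Fin 3) ℂ).totalDegree
          ≤ ((a 0 - 1) + (a 1 - 1) + (a 2 - 1)) + 2 :=
        (totalDegree_mul _ _).trans
          (add_le_add ((totalDegree_monomial_le _ _).trans hdegss'.le) hq)
      refine (totalDegree_add _ _).trans_lt (max_lt (e1.trans_lt ?_) (e2.trans_lt ?_)) <;> omega
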